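/- If the family {F_i : i ∈ ω} satisfies condition ♺: for every infinite I ⊆ ω and every choice x_i ∈ F_i (i ∈ I), the family {x_i : i ∈ I} is not linked (i.e., there exist i ≠ j in I with x_i ∩ x_j = ∅), then the countable product P = ∏_{i∈ω} X(F_i) can be written as the disjoint union of infinitely many non-empty clopen subsets; in particular P is not CLP-compact. -/

import Mathlib

/-- CLP-compact: every clopen cover has a finite subcover. -/
def CLPCompact (X : Type*) [TopologicalSpace X] : Prop :=
  ∀ C : Set (Set X), (∀ U ∈ C, IsClopen U) → ⋃₀ C = Set.univ →
    ∃ D ⊆ C, D.Finite ∧ ⋃₀ D = Set.univ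

/-- ℕ* : the nonprincipal ultrafilters on ℕ, with the topology inherited from βℕ. -/
def NStar : Type := {U : Ultrafilter ℕ // (U : Filter ℕ) ≤ Filter.cofinite}

instance : TopologicalSpace NStar := instTopologicalSpaceSubtype

/-- A* : the set of nonprincipal ultrafilters containing A. -/
def AStar (A : Set ℕ) : Set NStar := {U | A ∈ U.1}

/-- The space X(F): underlying set ℕ ⊔ F. -/
def XF (F : Set (Set NStar)) : Type := ℕ ⊕ F

/-- The coarsest topology making each {n} (n ∈ ℕ) open, and each {K} ∪ A open
whenever K ∈ F, A ⊆ ℕ and K ⊆ A*. -/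
instance (F : Set (Set NStar)) : TopologicalSpace (XF F) :=
  TopologicalSpace.generateFrom
    ({S | ∃ n : ℕ, S = {Sum.inl n}} ∪
     {S | ∃ (K : F) (A : Set ℕ), (K : Set NStar) ⊆ AStar A ∧
        S = insert (Sum.inr K) (Sum.inl '' A)})

/-- Condition ♺: no infinite selection x_i ∈ F_i is linked. -/
def Bicycle (F : ℕ → Set (Set NStar)) : Prop :=
  ∀ I : Set ℕ, I.Infinite → ∀ x : ℕ → Set NStar, (∀ i ∈ I, x i ∈ F i) →
    ∃ i ∈ I, ∃ j ∈ I, i ≠ j ∧ Disjoint (x i) (x j)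

@[simp] lemma XF.inl_inj {F : Set (Set NStar)} {a b : ℕ} :
    (Sum.inl a : XF F) = Sum.inl b ↔ a = b := Sum.inl_injective.eq_iff

@[simp] lemma XF.inl_ne_inr {F : Set (Set NStar)} {a : ℕ} {K : F} :
    (Sum.inl a : XF F) ≠ Sum.inr K := fun h => by cases h

@[simp] lemma XF.inr_ne_inl {F : Set (Set NStar)} {a : ℕ} {K : F} :
    (Sum.inr K : XF F) ≠ Sum.inl a := fun h => by cases h

@[simp] lemma XF.mem_inl_image {F : Set (Set NStar)} {a : ℕ} {A : Set ℕ} :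
    (Sum.inl a : XF F) ∈ Sum.inl '' A ↔ a ∈ A :=
  Sum.inl_injective.mem_set_image

lemma cofinite_mem_nstar (U : NStar) {s : Set ℕ} (hs : sᶜ.Finite) : s ∈ U.1 :=
  U.2 (by rwa [Filter.mem_cofinite])

lemma isOpen_inl_singleton (F : Set (Set NStar)) (n : ℕ) :
    IsOpen ({Sum.inl n} : Set (XF F)) :=
  TopologicalSpace.GenerateOpen.basic _ (Or.inl ⟨n, rfl⟩)

lemma isOpen_insert_inr (F : Set (Set NStar)) (K : F) (A : Set ℕ)
    (h : (K : Set NStar) ⊆ AStar A) :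
    IsOpen (insert (Sum.inr K) (Sum.inl '' A) : Set (XF F)) :=
  TopologicalSpace.GenerateOpen.basic _ (Or.inr ⟨K, A, h, rfl⟩)

lemma isClosed_inl_singleton (F : Set (Set NStar)) (n : ℕ) :
    IsClosed ({Sum.inl n} : Set (XF F)) := by
  rw [← isOpen_compl_iff]
  have heq : ({Sum.inl n} : Set (XF F))ᶜ =
      (⋃ m ∈ ({n}ᶜ : Set ℕ), ({Sum.inl m} : Set (XF F))) ∪
      ⋃ K : F, insert (Sum.inr K) (Sum.inl '' ({n}ᶜ : Set ℕ)) := by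
    ext y
    simp only [Set.mem_compl_iff, Set.mem_singleton_iff, Set.mem_union, Set.mem_iUnion,
      Set.mem_compl_iff, Set.mem_insert_iff]
    cases y with
    | inl m =>
      constructor
      · intro hy
        refine Or.inl ⟨m, fun h => hy ?_, rfl⟩
        rw [h]; rfl
      · rintro (⟨a, ha, hma⟩ | ⟨K, (hK | hK)⟩) h
        · change Sum.inl m = Sum.inl a at hma; change Sum.inl m = Sum.inl n at h
          rw [XF.inl_inj] at hma h
          exact ha (h ▸ hma).symm
        · exact XF.inl_ne_inr hK
        · replace hK := Sum.inl_injective.mem_set_image.mp hK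
          change Sum.inl m = Sum.inl n at h
          rw [XF.inl_inj] at h
          exact hK (Set.mem_singleton_iff.mpr h)
    | inr K =>
      constructor
      · intro _; exact Or.inr ⟨K, Or.inl rfl⟩
      · intro _ h; exact XF.inr_ne_inl h
  rw [heq]
  apply IsOpen.union
  · exact isOpen_biUnion fun m _ => isOpen_inl_singleton F m
  · exact isOpen_iUnion fun K => isOpen_insert_inr F K _
      (fun U _ => cofinite_mem_nstar U (by simp))

lemma isClosed_nstar_set :
    IsClosed {u : Ultrafilter ℕ | (u : Filter ℕ) ≤ Filter.cofinite} := by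
  have heq : {u : Ultrafilter ℕ | (u : Filter ℕ) ≤ Filter.cofinite} =
      ⋂ (s : Set ℕ) (_ : sᶜ.Finite), {u : Ultrafilter ℕ | s ∈ u} := by
    ext u
    simp only [Set.mem_setOf_eq, Set.mem_iInter, Filter.le_def, Filter.mem_cofinite,
      Ultrafilter.mem_coe]
  rw [heq]
  exact isClosed_iInter fun s => isClosed_iInter fun _ => ultrafilter_isClosed_basic s

lemma isCompact_val_image {K : Set NStar} (hK : IsClosed K) :
    IsCompact ((Subtype.val : NStar → Ultrafilter ℕ) '' K) := by
  have h1 : IsClosed ((Subtype.val : NStar → Ultrafilter ℕ) '' K) :=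
    (Topology.IsClosedEmbedding.subtypeVal isClosed_nstar_set).isClosedMap _ hK
  exact h1.isCompact

lemma sep_point {K' : Set (Ultrafilter ℕ)} (hK : IsCompact K') {v : Ultrafilter ℕ}
    (hv : v ∉ K') : ∃ A : Set ℕ, K' ⊆ {u | A ∈ u} ∧ Aᶜ ∈ v := by
  have key : ∀ u : Ultrafilter ℕ, ∃ s : Set ℕ, u ∈ K' → s ∈ u ∧ sᶜ ∈ v := by
    intro u
    by_cases hu : u ∈ K'
    · have hne : u ≠ v := fun h => hv (h ▸ hu)
      have hex : ∃ s : Set ℕ, s ∈ u ∧ sᶜ ∈ v := by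
        by_contra hcon
        push_neg at hcon
        have hle : (v : Filter ℕ) ≤ (u : Filter ℕ) :=
          Filter.le_def.mpr fun s hs => Ultrafilter.compl_notMem_iff.mp (hcon s hs)
        exact hne ((Ultrafilter.coe_le_coe.mp hle).symm)
      obtain ⟨s, h1, h2⟩ := hex
      exact ⟨s, fun _ => ⟨h1, h2⟩⟩
    · exact ⟨Set.univ, fun h => absurd h hu⟩
  choose s hs using key
  have hcov : K' ⊆ ⋃ u ∈ K', {w : Ultrafilter ℕ | s u ∈ w} := fun u hu =>
    Set.mem_biUnion hu (hs u hu).1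
  obtain ⟨t, htsub, htfin, hsub⟩ := hK.elim_finite_subcover_image
    (fun u _ => ultrafilter_isOpen_basic (s u)) hcov
  refine ⟨⋃ u ∈ t, s u, ?_, ?_⟩
  · intro w hw
    obtain ⟨u, hu, hwu⟩ := Set.mem_iUnion₂.mp (hsub hw)
    exact Filter.mem_of_superset hwu (Set.subset_biUnion_of_mem hu)
  · have : (⋃ u ∈ t, s u)ᶜ = ⋂ u ∈ t, (s u)ᶜ := by simp [Set.compl_iUnion]
    rw [this]
    exact (Filter.biInter_mem htfin).mpr fun u hu => (hs u (htsub hu)).2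

lemma sep_compact {K' L' : Set (Ultrafilter ℕ)} (hK : IsCompact K') (hL : IsCompact L')
    (hd : Disjoint K' L') :
    ∃ A B : Set ℕ, Disjoint A B ∧ K' ⊆ {u | A ∈ u} ∧ L' ⊆ {u | B ∈ u} := by
  have key : ∀ v : Ultrafilter ℕ, ∃ A : Set ℕ,
      v ∈ L' → K' ⊆ {u | A ∈ u} ∧ Aᶜ ∈ v := by
    intro v
    by_cases hv : v ∈ L'
    · obtain ⟨A, h1, h2⟩ := sep_point hK (Set.disjoint_right.mp hd hv)
      exact ⟨A, fun _ => ⟨h1, h2⟩⟩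
    · exact ⟨Set.univ, fun h => absurd h hv⟩
  choose A hA using key
  have hcov : L' ⊆ ⋃ v ∈ L', {w : Ultrafilter ℕ | (A v)ᶜ ∈ w} := fun v hv =>
    Set.mem_biUnion hv (hA v hv).2
  obtain ⟨t, htsub, htfin, hsub⟩ := hL.elim_finite_subcover_image
    (fun v _ => ultrafilter_isOpen_basic ((A v)ᶜ)) hcov
  refine ⟨⋂ v ∈ t, A v, ⋃ v ∈ t, (A v)ᶜ, ?_, ?_, ?_⟩
  · rw [Set.disjoint_left]
    intro a ha hb
    obtain ⟨v, hv, hav⟩ := Set.mem_iUnion₂.mp hb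
    exact hav (Set.mem_iInter₂.mp ha v hv)
  · intro u hu
    exact (Filter.biInter_mem htfin).mpr fun v hv => (hA v (htsub hv)).1 hu
  · intro w hw
    obtain ⟨v, hv, hwv⟩ := Set.mem_iUnion₂.mp (hsub hw)
    exact Filter.mem_of_superset hwv (Set.subset_biUnion_of_mem (u := fun v => (A v)ᶜ) hv)

lemma sep_nstar {K L : Set NStar} (hK : IsClosed K) (hL : IsClosed L) (hd : Disjoint K L) :
    ∃ A B : Set ℕ, Disjoint A B ∧ K ⊆ AStar A ∧ L ⊆ AStar B := by
  obtain ⟨A, B, hAB, h1, h2⟩ := sep_compact (isCompact_val_image hK) (isCompact_val_image hL)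
    (Set.disjoint_image_of_injective Subtype.val_injective hd)
  exact ⟨A, B, hAB, fun u hu => h1 ⟨u, hu, rfl⟩, fun u hu => h2 ⟨u, hu, rfl⟩⟩

def Un (F : ℕ → Set (Set NStar)) (n : ℕ) : Set (∀ i, XF (F i)) :=
  ⋂ i ∈ Set.Iic n, (fun x => x i) ⁻¹' {Sum.inl n}

lemma mem_Un {F : ℕ → Set (Set NStar)} {n : ℕ} {x : ∀ i, XF (F i)} :
    x ∈ Un F n ↔ ∀ i ≤ n, x i = Sum.inl n := by
  simp [Un]; exact Iff.rfl

lemma isClopen_Un (F : ℕ → Set (Set NStar)) (n : ℕ) : IsClopen (Un F n) := by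
  constructor
  · exact isClosed_biInter fun i _ =>
      (isClosed_inl_singleton (F i) n).preimage (continuous_apply i)
  · exact (Set.finite_Iic n).isOpen_biInter fun i _ =>
      (isOpen_inl_singleton (F i) n).preimage (continuous_apply i)

lemma exists_good_nbhd (F : Set (Set NStar)) (z : XF F) (E : Set ℕ) (hE : E.Finite)
    (hz : ∀ a ∈ E, z ≠ Sum.inl a) :
    ∃ O : Set (XF F), IsOpen O ∧ z ∈ O ∧
      ∀ a : ℕ, (Sum.inl a : XF F) ∈ O → a ∉ E ∧ ∀ b : ℕ, z = Sum.inl b → a = b := by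
  cases z with
  | inl b =>
    refine ⟨{Sum.inl b}, isOpen_inl_singleton F b, rfl, ?_⟩
    intro a ha
    have hab : a = b := XF.inl_inj.mp ha
    refine ⟨fun hmem => hz a hmem (by rw [hab]), fun c hc => ?_⟩
    rw [hab]
    exact XF.inl_inj.mp hc
  | inr K =>
    refine ⟨insert (Sum.inr K) (Sum.inl '' Eᶜ),
      isOpen_insert_inr F K Eᶜ (fun U _ => cofinite_mem_nstar U (by simpa using hE)),
      Set.mem_insert _ _, ?_⟩
    intro a ha
    rcases Set.mem_insert_iff.mp ha with h1 | h2
    · exact absurd h1 XF.inl_ne_inr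
    · exact ⟨XF.mem_inl_image.mp h2, fun c hc => absurd hc XF.inr_ne_inl⟩

lemma isClosed_iUnion_Un (F : ℕ → Set (Set NStar)) (hcl : ∀ i, ∀ K ∈ F i, IsClosed K)
    (hbike : Bicycle F) : IsClosed (⋃ n, Un F n) := by
  rw [← isOpen_compl_iff, isOpen_iff_forall_mem_open]
  intro x hx
  have hx' : ∀ n : ℕ, ∃ i, i ≤ n ∧ x i ≠ (Sum.inl n : XF (F i)) := by
    intro n
    by_contra hcon
    refine hx (Set.mem_iUnion.mpr ⟨n, mem_Un.mpr fun i hi => ?_⟩)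
    by_contra hne
    exact hcon ⟨i, hi, hne⟩
  by_cases h : ∃ i m, x i = (Sum.inl m : XF (F i))
  · obtain ⟨i₀, m, hi₀⟩ := h
    set N := max i₀ m with hNdef
    choose j hj1 hj2 using hx'
    have hEfin : ∀ l : ℕ, ({a | a ≤ N ∧ x l ≠ (Sum.inl a : XF (F l))}).Finite := fun l =>
      (Set.finite_Iic N).subset fun a ha => ha.1
    have hOex := fun l => exists_good_nbhd (F l) (x l) _ (hEfin l) (fun a ha => ha.2)
    choose O hO1 hO2 hO3 using hOex
    refine ⟨Set.pi (Set.Iic N) O, ?_,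
      isOpen_set_pi (Set.finite_Iic N) (fun l _ => hO1 l), fun l _ => hO2 l⟩
    intro y hy
    simp only [Set.mem_compl_iff, Set.mem_iUnion, not_exists]
    intro n hyn
    rw [mem_Un] at hyn
    by_cases hnN : n ≤ N
    · have hjn : j n ≤ N := le_trans (hj1 n) hnN
      have h1 : y (j n) = Sum.inl n := hyn (j n) (hj1 n)
      have h2 : (Sum.inl n : XF (F (j n))) ∈ O (j n) := h1 ▸ hy (j n) hjn
      exact (hO3 (j n) n h2).1 ⟨hnN, hj2 n⟩
    · push_neg at hnN
      have hi₀N : i₀ ≤ N := le_max_left _ _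
      have hmN : m ≤ N := le_max_right _ _
      have h1 : y i₀ = Sum.inl n := hyn i₀ (le_trans hi₀N hnN.le)
      have h2 : (Sum.inl n : XF (F i₀)) ∈ O i₀ := h1 ▸ hy i₀ hi₀N
      have h3 := (hO3 i₀ n h2).2 m hi₀
      omega
  · have hKex : ∀ l, ∃ K : (F l), x l = (Sum.inr K : XF (F l)) := by
      intro l
      cases hxl : x l with
      | inl a => exact absurd ⟨l, a, hxl⟩ h
      | inr K => exact ⟨K, rfl⟩
    choose K hKx using hKex
    obtain ⟨i, -, j, -, hij, hdij⟩ := hbike Set.univ Set.infinite_univ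
      (fun l => (K l : Set NStar)) (fun l _ => (K l).2)
    obtain ⟨A, B, hAB, hKA, hKB⟩ := sep_nstar (hcl i _ (K i).2) (hcl j _ (K j).2) hdij
    set N := max i j with hNdef
    refine ⟨Set.pi (Set.Iic N) (fun l => insert (Sum.inr (K l))
        (Sum.inl '' ({a | N < a} ∩ (if l = i then A else if l = j then B else Set.univ)))),
      ?_, ?_, ?_⟩
    · intro y hy
      simp only [Set.mem_compl_iff, Set.mem_iUnion, not_exists]
      intro n hyn
      rw [mem_Un] at hyn
      have hkey : ∀ l, l ≤ N → y l = Sum.inl n →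
          n ∈ {a | N < a} ∩ (if l = i then A else if l = j then B else Set.univ) := by
        intro l hl hyl
        have h2 := hy l hl
        rw [hyl] at h2
        rcases Set.mem_insert_iff.mp h2 with h3 | h3
        · exact absurd h3 XF.inl_ne_inr
        · exact XF.mem_inl_image.mp h3
      by_cases hnN : n ≤ N
      · have hc := (hkey 0 (Nat.zero_le N) (hyn 0 (Nat.zero_le n))).1
        have : N < n := hc
        omega
      · push_neg at hnN
        have hiN : i ≤ N := le_max_left _ _
        have hjN : j ≤ N := le_max_right _ _
        have hA : n ∈ A := by
          have := (hkey i hiN (hyn i (le_trans hiN hnN.le))).2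
          simpa using this
        have hB : n ∈ B := by
          have hji : j ≠ i := Ne.symm hij
          have := (hkey j hjN (hyn j (le_trans hjN hnN.le))).2
          simpa [hji] using this
        exact Set.disjoint_left.mp hAB hA hB
    · refine isOpen_set_pi (Set.finite_Iic N) (fun l _ => ?_)
      apply isOpen_insert_inr
      intro U hU
      have hm1 : {a | N < a} ∈ (U.1 : Filter ℕ) := by
        apply cofinite_mem_nstar
        apply (Set.finite_Iic N).subset
        intro a ha
        simp only [Set.mem_compl_iff, Set.mem_setOf_eq, not_lt] at ha
        exact ha
      have hm2 : (if l = i then A else if l = j then B else Set.univ) ∈ (U.1 : Filter ℕ) := by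
        split_ifs with e1 e2
        · subst e1; exact hKA hU
        · subst e2; exact hKB hU
        · exact Filter.univ_mem
      exact Filter.inter_mem hm1 hm2
    · intro l _
      rw [hKx l]
      exact Set.mem_insert _ _

lemma not_CLP_of_partition {X : Type*} [TopologicalSpace X] (U : ℕ → Set X)
    (hclopen : ∀ k, IsClopen (U k)) (hne : ∀ k, (U k).Nonempty)
    (hpw : Pairwise (Function.onFun Disjoint U)) (hcover : ⋃ k, U k = Set.univ) :
    ¬ CLPCompact X := by
  intro hclp
  obtain ⟨D, hDC, hDfin, hDuniv⟩ := hclp (Set.range U)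
    (by rintro V ⟨k, rfl⟩; exact hclopen k)
    (by rw [Set.sUnion_range]; exact hcover)
  have hUinj : Function.Injective U := by
    intro a b hab
    by_contra hne'
    have hd := hpw hne'
    rw [Function.onFun, hab, disjoint_self] at hd
    exact (hne b).ne_empty hd
  have hEfin : (U ⁻¹' D).Finite := hDfin.preimage hUinj.injOn
  obtain ⟨k, hk⟩ := (hEfin.infinite_compl).nonempty
  obtain ⟨x, hx⟩ := hne k
  have hxuniv : x ∈ ⋃₀ D := hDuniv ▸ Set.mem_univ x
  obtain ⟨V, hVD, hxV⟩ := hxuniv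
  obtain ⟨l, rfl⟩ := hDC hVD
  have hlk : l ≠ k := by
    rintro rfl
    exact hk hVD
  exact Set.disjoint_left.mp (hpw hlk) hxV hx


/-- If ♺ holds, then P = ∏_{i∈ω} X(F_i) is the disjoint union of infinitely many
non-empty clopen subsets; in particular P is not CLP-compact. -/
theorem full_product_partition (F : ℕ → Set (Set NStar))
    (hne : ∀ i, ∀ K ∈ F i, Set.Nonempty K) (hcl : ∀ i, ∀ K ∈ F i, IsClosed K)
    (hdisj : ∀ i, ∀ K ∈ F i, ∀ L ∈ F i, K ≠ L → Disjoint K L)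
    (hbike : Bicycle F) :
    (∃ U : ℕ → Set (∀ i : ℕ, XF (F i)), (∀ k, IsClopen (U k)) ∧
      (∀ k, (U k).Nonempty) ∧ Pairwise (Function.onFun Disjoint U) ∧
      ⋃ k, U k = Set.univ) ∧
    ¬ CLPCompact (∀ i : ℕ, XF (F i)) := by
  classical
  set W : Set (∀ i : ℕ, XF (F i)) := (⋃ n, Un F n)ᶜ with hW
  have hWclopen : IsClopen W := by
    constructor
    · exact (isOpen_iUnion fun n => (isClopen_Un F n).2).isClosed_compl
    · exact (isClosed_iUnion_Un F hcl hbike).isOpen_compl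
  have hUnne : ∀ n, (Un F n).Nonempty :=
    fun n => ⟨fun _ => Sum.inl n, mem_Un.mpr fun i _ => rfl⟩
  have hUndisj : ∀ {n m : ℕ}, n ≠ m → Disjoint (Un F n) (Un F m) := by
    intro n m hnm
    rw [Set.disjoint_left]
    intro x hxn hxm
    have h1 := mem_Un.mp hxn 0 (Nat.zero_le n)
    have h2 := mem_Un.mp hxm 0 (Nat.zero_le m)
    rw [h1] at h2
    exact hnm (XF.inl_inj.mp h2)
  have hWdisj : ∀ n, Disjoint (Un F n) W :=
    fun n => Disjoint.mono_left (Set.subset_iUnion (Un F) n) disjoint_compl_right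
  have hex : ∃ U : ℕ → Set (∀ i : ℕ, XF (F i)), (∀ k, IsClopen (U k)) ∧
      (∀ k, (U k).Nonempty) ∧ Pairwise (Function.onFun Disjoint U) ∧
      ⋃ k, U k = Set.univ := by
    refine ⟨fun k => if k = 0 then Un F 0 ∪ W else Un F k, ?_, ?_, ?_, ?_⟩
    · intro k
      by_cases hk : k = 0
      · simp only [hk, if_pos rfl]; exact (isClopen_Un F 0).union hWclopen
      · simp only [if_neg hk]; exact isClopen_Un F k
    · intro k
      by_cases hk : k = 0
      · simp only [hk, if_pos rfl]
        exact ⟨fun _ => Sum.inl 0, Or.inl (mem_Un.mpr fun i _ => rfl)⟩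
      · simp only [if_neg hk]; exact hUnne k
    · intro k l hkl
      simp only [Function.onFun]
      by_cases hk : k = 0 <;> by_cases hl : l = 0
      · exact absurd (hk.trans hl.symm) hkl
      · subst hk
        simp only [if_pos rfl, if_neg hl]
        exact Disjoint.union_left (hUndisj hkl) ((hWdisj l).symm)
      · subst hl
        simp only [if_pos rfl, if_neg hk]
        exact Disjoint.union_right (hUndisj hkl) (hWdisj k)
      · simp only [if_neg hk, if_neg hl]
        exact hUndisj hkl
    · apply Set.eq_univ_of_forall
      intro x
      by_cases hx : x ∈ ⋃ n, Un F n
      · obtain ⟨n, hn⟩ := Set.mem_iUnion.mp hx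
        rcases n with _ | m
        · exact Set.mem_iUnion.mpr ⟨0, by simp only [if_pos rfl]; exact Or.inl hn⟩
        · exact Set.mem_iUnion.mpr ⟨m + 1, by simp only [if_neg (Nat.succ_ne_zero m)]; exact hn⟩
      · exact Set.mem_iUnion.mpr ⟨0, by simp only [if_pos rfl]; exact Or.inr hx⟩
  refine ⟨hex, ?_⟩
  obtain ⟨U, h1, h2, h3, h4⟩ := hex
  exact not_CLP_of_partition U h1 h2 h3 h4
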